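/- Let X be a metric space, S a nonempty subset of X, and μ a finite Borel measure on X. Suppose there exist constants C > 0 and a > 0 such that μ({x : infDist(x, S) < ε}) ≤ C·ε^a for every real ε with 0 < ε ≤ 1, where infDist(x, S) denotes the infimum distance from x to S. Then for every natural number ℓ, the function x ↦ |log(infDist(x, S))|^ℓ is μ-integrable on the set {x : infDist(x, S) ≤ 1}. -/

import Mathlib

open MeasureTheory

/-- Polynomial tail bounds on neighborhoods of `S` imply integrability of all powers of
`|log dist(·, S)|` near `S`. -/
theorem stmt17 {X : Type*} [MetricSpace X] [MeasurableSpace X] [BorelSpace X]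
    (S : Set X) (hS : S.Nonempty) (μ : Measure X) [IsFiniteMeasure μ]
    (C a : ℝ) (hC : 0 < C) (ha : 0 < a)
    (h : ∀ ε : ℝ, 0 < ε → ε ≤ 1 →
      μ {x | Metric.infDist x S < ε} ≤ ENNReal.ofReal (C * ε ^ a)) :
    ∀ ℓ : ℕ, IntegrableOn
      (fun x => |Real.log (Metric.infDist x S)| ^ ℓ)
      {x | Metric.infDist x S ≤ 1} μ := by
  intro ℓ
  rcases Nat.eq_zero_or_pos ℓ with rfl | hℓ
  · simpa using (integrable_const (1 : ℝ)).integrableOn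
  have hdc : Continuous fun x => Metric.infDist x S := Metric.continuous_infDist_pt S
  have hmeas : Measurable fun x => |Real.log (Metric.infDist x S)| ^ ℓ :=
    (Real.measurable_log.comp hdc.measurable).abs.pow_const ℓ
  refine ⟨hmeas.aestronglyMeasurable, ?_⟩
  show (∫⁻ x, (‖|Real.log (Metric.infDist x S)| ^ ℓ‖₊ : ENNReal)
      ∂(μ.restrict {x | Metric.infDist x S ≤ 1})) < ⊤
  -- sets B n and functions g n
  set B : ℕ → Set X := fun n => {x | Metric.infDist x S < Real.exp (-(n : ℝ))} with hB
  have hBmeas : ∀ n, MeasurableSet (B n) :=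
    fun n => measurableSet_lt hdc.measurable measurable_const
  set g : ℕ → X → ENNReal := fun n =>
    (B n).indicator (fun _ => ((n : ENNReal) + 1) ^ ℓ) with hg
  -- pointwise bound
  have hpt : ∀ x, Metric.infDist x S ≤ 1 →
      (‖|Real.log (Metric.infDist x S)| ^ ℓ‖₊ : ENNReal) ≤ ∑' n, g n x := by
    intro x hx
    rcases eq_or_lt_of_le (Metric.infDist_nonneg (x := x) (s := S)) with h0 | h0
    · simp [← h0, Real.log_zero, zero_pow hℓ.ne']
    set t : ℝ := -Real.log (Metric.infDist x S) with hT
    have hlog : Real.log (Metric.infDist x S) ≤ 0 := Real.log_nonpos h0.le hx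
    have ht0 : 0 ≤ t := by simpa [hT] using neg_nonneg.2 hlog
    have habs : |Real.log (Metric.infDist x S)| = t := by
      rw [abs_of_nonpos hlog]
    rcases eq_or_lt_of_le ht0 with ht | ht
    · simp [habs, ← ht, zero_pow hℓ.ne']
    -- choose n0 = ⌈t⌉ - 1
    set m : ℕ := ⌈t⌉₊ with hm
    have hm1 : 1 ≤ m := Nat.one_le_iff_ne_zero.2 (by
      simp [hm, Nat.ceil_eq_zero, not_le, ht])
    have htm : t ≤ m := Nat.le_ceil t
    have hmt : (m : ℝ) - 1 < t := by
      have := Nat.ceil_lt_add_one ht0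
      linarith
    have hxB : x ∈ B (m - 1) := by
      have hcast : ((m - 1 : ℕ) : ℝ) = (m : ℝ) - 1 := by
        push_cast [Nat.cast_sub hm1]; ring
      have hd : Metric.infDist x S = Real.exp (-t) := by
        rw [hT, neg_neg, Real.exp_log h0]
      have : Real.exp (-t) < Real.exp (-(((m - 1 : ℕ)) : ℝ)) := by
        apply Real.exp_lt_exp.2
        rw [hcast]; linarith
      simpa [hB, hd] using this
    have hsum_ge : g (m - 1) x ≤ ∑' n, g n x := ENNReal.le_tsum _
    refine le_trans ?_ hsum_ge
    have hgval : g (m - 1) x = ((((m - 1 : ℕ)) : ENNReal) + 1) ^ ℓ := by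
      simp [hg, Set.indicator_of_mem hxB]
    have hcast2 : (((m - 1 : ℕ)) : ENNReal) + 1 = (m : ENNReal) := by
      have h' : (((m - 1 : ℕ)) : ENNReal) + 1 = ((m - 1 + 1 : ℕ) : ENNReal) := by
        push_cast; ring
      rw [h', Nat.sub_add_cancel hm1]
    rw [hgval, hcast2]
    have : (‖|Real.log (Metric.infDist x S)| ^ ℓ‖₊ : ENNReal)
        = ENNReal.ofReal (t ^ ℓ) := by
      rw [← Real.enorm_eq_ofReal (by positivity), habs, enorm_eq_nnnorm]
    rw [this]
    calc ENNReal.ofReal (t ^ ℓ) ≤ ENNReal.ofReal ((m : ℝ) ^ ℓ) :=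
          ENNReal.ofReal_le_ofReal (pow_le_pow_left₀ ht0 htm ℓ)
      _ = (m : ENNReal) ^ ℓ := by
          rw [ENNReal.ofReal_pow (by positivity), ENNReal.ofReal_natCast]
  -- integral bound
  have hmono : ∫⁻ x in {x | Metric.infDist x S ≤ 1},
      (‖|Real.log (Metric.infDist x S)| ^ ℓ‖₊ : ENNReal) ∂μ
      ≤ ∫⁻ x in {x | Metric.infDist x S ≤ 1}, ∑' n, g n x ∂μ := by
    refine lintegral_mono_ae ?_
    filter_upwards [ae_restrict_mem (measurableSet_le hdc.measurable measurable_const)]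
      with x hx using hpt x hx
  refine lt_of_le_of_lt hmono ?_
  rw [lintegral_tsum fun n =>
    ((measurable_const.indicator (hBmeas n)).aemeasurable)]
  -- each term bound
  have hterm : ∀ n, ∫⁻ x in {x | Metric.infDist x S ≤ 1}, g n x ∂μ
      ≤ ENNReal.ofReal (((n : ℝ) + 1) ^ ℓ * (C * Real.exp (-a) ^ n)) := by
    intro n
    simp only [hg]
    rw [lintegral_indicator (hBmeas n), setLIntegral_const]
    have hμB : (μ.restrict {x | Metric.infDist x S ≤ 1}) (B n) ≤
        ENNReal.ofReal (C * Real.exp (-a) ^ n) := by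
      refine le_trans (Measure.restrict_apply_le _ _) ?_
      have hε1 : Real.exp (-(n : ℝ)) ≤ 1 := Real.exp_le_one_iff.2 (neg_nonpos.2 (Nat.cast_nonneg n))
      refine le_trans (h _ (Real.exp_pos _) hε1) ?_
      apply ENNReal.ofReal_le_ofReal
      have : Real.exp (-(n : ℝ)) ^ a = Real.exp (-a) ^ n := by
        rw [← Real.exp_mul, ← Real.exp_nat_mul]
        ring_nf
      rw [this]
    calc ((n : ENNReal) + 1) ^ ℓ * (μ.restrict {x | Metric.infDist x S ≤ 1}) (B n)
        ≤ ((n : ENNReal) + 1) ^ ℓ * ENNReal.ofReal (C * Real.exp (-a) ^ n) :=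
          mul_le_mul_right hμB _
      _ = ENNReal.ofReal (((n : ℝ) + 1) ^ ℓ * (C * Real.exp (-a) ^ n)) := by
          rw [ENNReal.ofReal_mul (by positivity : (0:ℝ) ≤ ((n:ℝ)+1)^ℓ),
            ENNReal.ofReal_mul hC.le,
            ENNReal.ofReal_pow (by positivity : (0:ℝ) ≤ (n:ℝ)+1),
            ENNReal.ofReal_pow (Real.exp_pos _).le,
            ENNReal.ofReal_add (Nat.cast_nonneg n) zero_le_one,
            ENNReal.ofReal_natCast, ENNReal.ofReal_one]
  refine lt_of_le_of_lt (ENNReal.tsum_le_tsum hterm) ?_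
  -- summability
  have hr : |Real.exp (-a)| < 1 := by
    rw [abs_of_pos (Real.exp_pos _)]
    exact Real.exp_lt_one_iff.2 (by linarith)
  have hsum0 : Summable fun n : ℕ => (n : ℝ) ^ ℓ * Real.exp (-a) ^ n :=
    summable_pow_mul_geometric_of_norm_lt_one ℓ (by simpa using hr)
  have hsum1 : Summable fun n : ℕ => ((n : ℝ) + 1) ^ ℓ * Real.exp (-a) ^ n := by
    have h2 := ((summable_nat_add_iff 1).2 hsum0).mul_left (Real.exp (-a))⁻¹
    refine h2.congr fun n => ?_
    have hne : Real.exp (-a) ≠ 0 := (Real.exp_pos _).ne'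
    push_cast
    field_simp
    ring
  have hsum2 : Summable fun n : ℕ => ((n : ℝ) + 1) ^ ℓ * (C * Real.exp (-a) ^ n) := by
    refine ((hsum1.mul_left C).congr fun n => by ring)
  rw [← ENNReal.ofReal_tsum_of_nonneg (fun n => by positivity) hsum2]
  exact ENNReal.ofReal_lt_top
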